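/- arXiv:1608.02727 — 4 statements merged into one kernel-verified Lean document; each statement's English description precedes it below -/
import Mathlib

section
/- Let p be a prime and G a finite group such that p divides the order of G, the Sylow p-subgroups of G are not normal, any two distinct Sylow p-subgroups of G intersect in the trivial subgroup, and every nontrivial normal subgroup of G has order divisible by p (i.e. O_{p'}(G) = 1). Then G has a unique minimal normal subgroup S, and S is a nonabelian simple group. -/
open Subgroup Pointwise

set_option linter.unusedSectionVars false

section Aux
variable {p : ℕ} [Fact p.Prime] {G : Type} [Group G] [Finite G]

lemma myEqOfLeCard {H K : Subgroup G} (h : H ≤ K) (hc : Nat.card K ≤ Nat.card H) : H = K := by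
  apply SetLike.ext'
  apply Set.eq_of_subset_of_ncard_le h _ (Set.toFinite _)
  rwa [← Nat.card_coe_set_eq, ← Nat.card_coe_set_eq]

lemma myCardMapSubtype {S : Subgroup G} (K : Subgroup ↥S) :
    Nat.card (K.map S.subtype) = Nat.card K :=
  (Nat.card_congr (K.equivMapOfInjective S.subtype (subtype_injective S)).toEquiv).symm

lemma map_ne_bot {H : Type} [Group H] {K : Type} [Group K] (f : H →* K)
    (hf : Function.Injective f) (U : Subgroup H) (hU : U ≠ ⊥) : U.map f ≠ ⊥ := by
  intro h
  apply hU
  rw [eq_bot_iff]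
  intro u hu
  have h1 : f u ∈ U.map f := Subgroup.mem_map_of_mem f hu
  rw [h, Subgroup.mem_bot] at h1
  have : f u = f 1 := by rw [h1, map_one]
  rw [Subgroup.mem_bot]
  exact hf this

lemma pnormal_eq_bot (hnotnormal : ∀ P : Sylow p G, ¬ (P : Subgroup G).Normal)
    (hTI : ∀ P Q : Sylow p G, P ≠ Q → (P : Subgroup G) ⊓ (Q : Subgroup G) = ⊥)
    {N : Subgroup G} (hN : N.Normal) (hNp : IsPGroup p N) : N = ⊥ := by
  obtain ⟨P⟩ : Nonempty (Sylow p G) := inferInstance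
  have hle : ∀ Q : Sylow p G, N ≤ (Q : Subgroup G) := by
    intro Q
    haveI := hN
    have h1 : IsPGroup p ((N ⊔ Q : Subgroup G)) := IsPGroup.to_sup_of_normal_left hNp Q.isPGroup'
    have h2 := Q.is_maximal' h1 le_sup_right
    rw [← h2]
    exact le_sup_left
  obtain ⟨g, hg⟩ : ∃ g : G, g • P ≠ P := by
    by_contra h
    push_neg at h
    refine hnotnormal P (normalizer_eq_top_iff.mp (top_le_iff.mp ?_))
    intro g _
    exact Sylow.smul_eq_iff_mem_normalizer.mp (h g)
  have := hTI (g • P) P hg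
  rw [le_bot_iff.mp (le_trans (le_inf (hle _) (hle _)) this.le)]

lemma exists_mem_orderOf_eq {N : Subgroup G} (h : p ∣ Nat.card N) :
    ∃ x : G, x ∈ N ∧ orderOf x = p := by
  obtain ⟨y, hy⟩ := exists_prime_orderOf_dvd_card' (G := ↥N) p h
  exact ⟨↑y, y.2, by rw [orderOf_coe, hy]⟩

lemma zpowers_isPGroup {x : G} (hx : orderOf x = p) : IsPGroup p (zpowers x) :=
  IsPGroup.of_card (n := 1) (by rw [Nat.card_zpowers, hx, pow_one])

lemma exists_sylow_of_commute {x y : G} (hx : orderOf x = p) (hy : orderOf y = p)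
    (h : Commute x y) : ∃ P : Sylow p G, x ∈ (P : Subgroup G) ∧ y ∈ (P : Subgroup G) := by
  have key : ∀ (u : G), Commute u y → ∀ k : ℤ, u * y ^ k * u⁻¹ = y ^ k := by
    intro u hu k
    rw [(hu.zpow_right k).eq, mul_inv_cancel_right]
  have hnorm : zpowers x ≤ normalizer (zpowers y : Set G) := by
    rw [zpowers_le]
    rw [mem_normalizer_iff]
    intro a
    simp only [mem_zpowers_iff]
    constructor
    · rintro ⟨k, rfl⟩
      exact ⟨k, (key x h k).symm⟩
    · rintro ⟨k, hk⟩
      refine ⟨k, ?_⟩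
      have h2 := key x⁻¹ h.inv_left k
      rw [inv_inv] at h2
      rw [← h2, hk]
      group
  have hsup : IsPGroup p ((zpowers x ⊔ zpowers y : Subgroup G)) :=
    IsPGroup.to_sup_of_normal_right' (zpowers_isPGroup hx) (zpowers_isPGroup hy) hnorm
  obtain ⟨P, hP⟩ := hsup.exists_le_sylow
  exact ⟨P, hP (le_sup_left (α := Subgroup G) (mem_zpowers x)),
    hP (le_sup_right (α := Subgroup G) (mem_zpowers y))⟩


-- Engine A: if y is a p-element in Sylow P commuting with all of normal N, then N fixes all Sylows
lemma fixes_all_sylows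
    (hTI : ∀ P Q : Sylow p G, P ≠ Q → (P : Subgroup G) ⊓ (Q : Subgroup G) = ⊥)
    {N : Subgroup G} (hN : N.Normal) {y : G} (hy : orderOf y = p)
    (hcomm : ∀ n ∈ N, Commute n y) {P : Sylow p G} (hyP : y ∈ (P : Subgroup G)) :
    ∀ (Q : Sylow p G) (n : G), n ∈ N → n • Q = Q := by
  have hy1 : y ≠ 1 := by
    intro h
    rw [h, orderOf_one] at hy
    exact (Fact.out : p.Prime).one_lt.ne hy
  have hfixP : ∀ n ∈ N, n • P = P := by
    intro n hn
    by_contra hne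
    have hinf := hTI (n • P) P hne
    have hyn : y ∈ ((n • P : Sylow p G) : Subgroup G) := by
      have h1 : MulAut.conj n • y ∈ MulAut.conj n • (P : Subgroup G) :=
        smul_mem_pointwise_smul y _ _ hyP
      have h2 : MulAut.conj n • y = y := by
        simp only [MulAut.smul_def, MulAut.conj_apply]
        rw [(hcomm n hn).eq, mul_inv_cancel_right]
      rw [h2] at h1
      exact h1
    have : y ∈ ((n • P : Sylow p G) : Subgroup G) ⊓ (P : Subgroup G) := ⟨hyn, hyP⟩
    rw [hinf] at this
    exact hy1 this
  intro Q n hn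
  obtain ⟨g, rfl⟩ := MulAction.exists_smul_eq G P Q
  have h2 : g⁻¹ * n * g ∈ N := by
    have := hN.conj_mem n hn g⁻¹
    simpa using this
  calc n • g • P = (n * g) • P := (mul_smul n g P).symm
    _ = (g * (g⁻¹ * n * g)) • P := by group
    _ = g • ((g⁻¹ * n * g) • P) := mul_smul _ _ _
    _ = g • P := by rw [hfixP _ h2]

-- Engine B: a normal Sylow in a normal subgroup S (with p ∣ |S|) is impossible
lemma no_normal_sylow (hnotnormal : ∀ P : Sylow p G, ¬ (P : Subgroup G).Normal)
    (hTI : ∀ P Q : Sylow p G, P ≠ Q → (P : Subgroup G) ⊓ (Q : Subgroup G) = ⊥)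
    {S : Subgroup G} (hS : S.Normal) (hpS : p ∣ Nat.card S)
    (Q : Sylow p ↥S) (hQ : (Q : Subgroup ↥S).Normal) : False := by
  haveI := hS
  haveI : Unique (Sylow p ↥S) := Sylow.unique_of_normal Q hQ
  set D : Subgroup G := (Q : Subgroup ↥S).map S.subtype with hD
  have hDp : IsPGroup p D := Q.isPGroup'.map _
  have hDnormal : D.Normal := by
    constructor
    intro a ha g
    obtain ⟨q, hq, rfl⟩ := ha
    have h1 : g * S.subtype q * g⁻¹ = S.subtype (MulAut.conjNormal g q) :=
      (MulAut.conjNormal_apply g q).symm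
    rw [h1]
    apply mem_map_of_mem
    have h3 : IsPGroup p ((Q : Subgroup ↥S).map (MulAut.conjNormal g).toMonoidHom) :=
      Q.isPGroup'.map _
    obtain ⟨Q₂, hQ₂⟩ := h3.exists_le_sylow
    have hQ₂Q : Q₂ = Q := Subsingleton.elim _ _
    rw [← hQ₂Q]
    exact hQ₂ (mem_map_of_mem _ hq)
  obtain ⟨x, hxS, hx⟩ := exists_mem_orderOf_eq hpS
  have hx1 : x ≠ 1 := by
    intro h
    rw [h, orderOf_one] at hx
    exact (Fact.out : p.Prime).one_lt.ne hx
  have hxD : x ∈ D := by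
    have hzp : IsPGroup p (zpowers (⟨x, hxS⟩ : ↥S)) :=
      zpowers_isPGroup (by rw [orderOf_mk, hx])
    obtain ⟨Q₂, hQ₂⟩ := hzp.exists_le_sylow
    have hQ₂Q : Q₂ = Q := Subsingleton.elim _ _
    have : (⟨x, hxS⟩ : ↥S) ∈ (Q₂ : Subgroup ↥S) := hQ₂ (mem_zpowers _)
    rw [hQ₂Q] at this
    exact ⟨⟨x, hxS⟩, this, rfl⟩
  rw [pnormal_eq_bot hnotnormal hTI hDnormal hDp] at hxD
  exact hx1 hxD


-- two disjoint nontrivial normal subgroups are impossible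
lemma no_two_disjoint_normals
    (hnotnormal : ∀ P : Sylow p G, ¬ (P : Subgroup G).Normal)
    (hTI : ∀ P Q : Sylow p G, P ≠ Q → (P : Subgroup G) ⊓ (Q : Subgroup G) = ⊥)
    (hOp' : ∀ N : Subgroup G, N.Normal → N ≠ ⊥ → p ∣ Nat.card N)
    {N M : Subgroup G} (hN : N.Normal) (hM : M.Normal) (hNbot : N ≠ ⊥) (hMbot : M ≠ ⊥)
    (hNM : N ⊓ M = ⊥) : False := by
  obtain ⟨x, hxN, hx⟩ := exists_mem_orderOf_eq (hOp' N hN hNbot)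
  obtain ⟨y, hyM, hy⟩ := exists_mem_orderOf_eq (hOp' M hM hMbot)
  have hcomm : ∀ n ∈ N, ∀ m ∈ M, Commute n m := fun n hn m hm =>
    commute_of_normal_of_disjoint N M hN hM (by rw [disjoint_iff, hNM]) n m hn hm
  obtain ⟨P, hxP, hyP⟩ := exists_sylow_of_commute hx hy (hcomm x hxN y hyM)
  have hfix : ∀ (Q : Sylow p G) (n : G), n ∈ N → n • Q = Q :=
    fixes_all_sylows hTI hN hy (fun n hn => hcomm n hn y hyM) hyP
  -- build the Sylow of N containing x
  have hzp : IsPGroup p (zpowers (⟨x, hxN⟩ : ↥N)) := zpowers_isPGroup (by rw [orderOf_mk, hx])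
  obtain ⟨Q, hQ⟩ := hzp.exists_le_sylow
  set D : Subgroup G := (Q : Subgroup ↥N).map N.subtype with hD
  have hDN : D ≤ N := map_subtype_le _
  have hDp : IsPGroup p D := Q.isPGroup'.map _
  obtain ⟨P₁, hP₁⟩ := hDp.exists_le_sylow
  have hD_eq : D = N ⊓ (P₁ : Subgroup G) := by
    apply le_antisymm (le_inf hDN hP₁)
    have hR : IsPGroup p ((N ⊓ (P₁ : Subgroup G)).subgroupOf N) :=
      IsPGroup.comap_subtype (P₁.isPGroup'.to_le inf_le_right)
    have hQR : (Q : Subgroup ↥N) ≤ (N ⊓ (P₁ : Subgroup G)).subgroupOf N := by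
      intro q hq
      rw [mem_subgroupOf]
      exact ⟨q.2, hP₁ (mem_map_of_mem _ hq)⟩
    have hRQ := Q.is_maximal' hR hQR
    intro a ha
    have : (⟨a, ha.1⟩ : ↥N) ∈ (N ⊓ (P₁ : Subgroup G)).subgroupOf N := by
      rw [mem_subgroupOf]
      exact ha
    rw [hRQ] at this
    exact ⟨⟨a, ha.1⟩, this, rfl⟩
  -- D is invariant under conjugation by N
  have hDinv : ∀ n ∈ N, ∀ a ∈ D, n * a * n⁻¹ ∈ D := by
    intro n hn a ha
    rw [hD_eq] at ha ⊢
    refine ⟨hN.conj_mem a ha.1 n, ?_⟩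
    have h1 : MulAut.conj n • a ∈ MulAut.conj n • (P₁ : Subgroup G) :=
      smul_mem_pointwise_smul a _ _ ha.2
    have h2 : MulAut.conj n • (P₁ : Subgroup G) = ((n • P₁ : Sylow p G) : Subgroup G) := rfl
    rw [h2, hfix P₁ n hn] at h1
    exact h1
  -- hence Q is normal in ↥N
  have hQnormal : (Q : Subgroup ↥N).Normal := by
    constructor
    intro q hq n
    have h1 : (↑(n * q * n⁻¹) : G) ∈ D := by
      have := hDinv n n.2 q (mem_map_of_mem _ hq)
      simpa using this
    obtain ⟨q', hq', hq'e⟩ := h1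
    have : q' = n * q * n⁻¹ := Subtype.ext hq'e
    rwa [← this]
  exact no_normal_sylow hnotnormal hTI hN (hOp' N hN hNbot) Q hQnormal

lemma myCardSupDvd (H K : Subgroup G) (hK : K.Normal) :
    Nat.card ↥(H ⊔ K) ∣ Nat.card H * Nat.card K := by
  haveI := hK
  set J := H ⊔ K with hJ
  set K' : Subgroup ↥J := K.subgroupOf J with hK'
  haveI : K'.Normal := hK.subgroupOf J
  have hcard : Nat.card ↥J = Nat.card (↥J ⧸ K') * Nat.card K' :=
    Subgroup.card_eq_card_quotient_mul_card_subgroup K'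
  have hKcard : Nat.card K' = Nat.card K :=
    Nat.card_congr (subgroupOfEquivOfLe (le_sup_right : K ≤ J)).toEquiv
  have hquot : Nat.card (↥J ⧸ K') ∣ Nat.card H := by
    have hsurj : Function.Surjective
        ((QuotientGroup.mk' K').comp (inclusion (le_sup_left : H ≤ J))) := by
      intro z
      obtain ⟨j, rfl⟩ := QuotientGroup.mk'_surjective K' z
      have hj : (j : G) ∈ (H : Set G) * (K : Set G) := by
        rw [← Subgroup.mul_normal]
        exact j.2
      obtain ⟨h, hh, k, hk, hhk⟩ := hj
      refine ⟨(⟨h, hh⟩ : ↥H), ?_⟩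
      simp only [MonoidHom.comp_apply]
      rw [QuotientGroup.mk'_eq_mk']
      refine ⟨⟨k, (le_sup_right : K ≤ J) hk⟩, ?_, ?_⟩
      · rw [hK', mem_subgroupOf]
        exact hk
      · apply Subtype.ext
        exact hhk
    exact Subgroup.card_dvd_of_surjective _ hsurj
  rw [hcard, hKcard]
  exact mul_dvd_mul_right hquot _

lemma op'_transfer
    (hOp' : ∀ N : Subgroup G, N.Normal → N ≠ ⊥ → p ∣ Nat.card N)
    {S : Subgroup G} (hS : S.Normal) (K : Subgroup ↥S) (hK : K.Normal)
    (hKbot : K ≠ ⊥) : p ∣ Nat.card K := by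
  by_contra hpK
  haveI := hS
  classical
  haveI : Fintype G := Fintype.ofFinite G
  set f : G → Subgroup ↥S := fun g => K.map (MulAut.conjNormal g).toMonoidHom with hf
  have hfmul : ∀ g h : G, (f h).map (MulAut.conjNormal g).toMonoidHom = f (g * h) := by
    intro g h
    rw [hf]
    simp only [Subgroup.map_map]
    congr 1
    ext z
    simp [MulAut.conjNormal, mul_smul]
  set M : Subgroup ↥S := ⨆ g : G, f g with hM
  have hfcard : ∀ g, Nat.card (f g) = Nat.card K := by
    intro g
    exact (Nat.card_congr (K.equivMapOfInjective _ (MulAut.conjNormal g).injective).toEquiv).symm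
  have hfnormal : ∀ g, (f g).Normal := fun g =>
    Subgroup.Normal.map hK _ (MulEquiv.surjective _)
  have hMsup : M = Finset.univ.sup f := (Finset.sup_univ_eq_iSup f).symm
  have hpM : ¬ p ∣ Nat.card M := by
    rw [hMsup]
    have := Finset.sup_induction (p := fun A : Subgroup ↥S => A.Normal ∧ ¬ p ∣ Nat.card A)
      (s := Finset.univ) (f := f)
      ⟨⟨fun a ha g => by rw [Subgroup.mem_bot] at ha; simp [ha]⟩, by rw [Subgroup.card_bot]; exact (Fact.out : p.Prime).not_dvd_one⟩
      (fun A hA B hB => by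
        haveI := hA.1; haveI := hB.1
        refine ⟨Subgroup.sup_normal A B, fun hd => ?_⟩
        have := hd.trans (myCardSupDvd A B hB.1)
        rcases ((Fact.out : p.Prime).dvd_mul).mp this with h | h
        · exact hA.2 h
        · exact hB.2 h)
      (fun g _ => ⟨hfnormal g, by rw [hfcard g]; exact hpK⟩)
    exact this.2
  set M' : Subgroup G := M.map S.subtype with hM'
  have hM'card : Nat.card M' = Nat.card M := myCardMapSubtype M
  have hKM : K ≤ M := by
    have h1 : f 1 = K := by
      rw [hf]
      simp only [map_one]
      exact Subgroup.map_id K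
    rw [hM, ← h1]
    exact le_iSup f 1
  have hM'bot : M' ≠ ⊥ := by
    intro hbot
    apply hKbot
    rw [eq_bot_iff]
    intro k hk
    have : (↑k : G) ∈ M' := mem_map_of_mem _ (hKM hk)
    rw [hbot, Subgroup.mem_bot] at this
    have : k = 1 := Subtype.ext this
    simpa [this]
  have hM'normal : M'.Normal := by
    constructor
    intro a ha g
    obtain ⟨m, hm, rfl⟩ := ha
    have h2 : MulAut.conjNormal g m ∈ M := by
      have hMfix : M.map (MulAut.conjNormal g).toMonoidHom = M := by
        rw [hM, Subgroup.map_iSup]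
        simp_rw [hfmul g]
        apply le_antisymm
        · exact iSup_le fun h => le_iSup f (g * h)
        · refine iSup_le fun h => ?_
          have : f h = f (g * (g⁻¹ * h)) := by rw [mul_inv_cancel_left]
          rw [this]
          exact le_iSup (fun h' => f (g * h')) (g⁻¹ * h)
      rw [← hMfix]
      exact mem_map_of_mem _ hm
    have h1 : g * S.subtype m * g⁻¹ = S.subtype (MulAut.conjNormal g m) :=
      (MulAut.conjNormal_apply g m).symm
    rw [h1]
    exact mem_map_of_mem _ h2
  have := hOp' M' hM'normal hM'bot
  rw [hM'card] at this
  exact hpM this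

lemma TI_transfer
    (hTI : ∀ P Q : Sylow p G, P ≠ Q → (P : Subgroup G) ⊓ (Q : Subgroup G) = ⊥)
    (S : Subgroup G) (Q₁ Q₂ : Sylow p ↥S) (hne : Q₁ ≠ Q₂) :
    (Q₁ : Subgroup ↥S) ⊓ (Q₂ : Subgroup ↥S) = ⊥ := by
  obtain ⟨P₁, hP₁⟩ := (Q₁.isPGroup'.map S.subtype).exists_le_sylow
  obtain ⟨P₂, hP₂⟩ := (Q₂.isPGroup'.map S.subtype).exists_le_sylow
  have hPne : P₁ ≠ P₂ := by
    rintro rfl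
    apply hne
    have key : ∀ Q : Sylow p ↥S, ((Q : Subgroup ↥S).map S.subtype ≤ (P₁ : Subgroup G)) →
        Q = (((P₁ : Subgroup G) ⊓ S).subgroupOf S : Subgroup ↥S) := by
      intro Q hQ
      have hR : IsPGroup p (((P₁ : Subgroup G) ⊓ S).subgroupOf S) :=
        IsPGroup.comap_subtype (P₁.isPGroup'.to_le inf_le_left)
      have hle : (Q : Subgroup ↥S) ≤ ((P₁ : Subgroup G) ⊓ S).subgroupOf S := by
        intro q hq
        rw [mem_subgroupOf]
        exact ⟨hQ (mem_map_of_mem _ hq), q.2⟩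
      exact (Q.is_maximal' hR hle).symm
    apply Sylow.ext
    rw [key Q₁ hP₁, key Q₂ hP₂]
  have hbot := hTI P₁ P₂ hPne
  rw [eq_bot_iff]
  intro q hq
  have h1 : (↑q : G) ∈ (P₁ : Subgroup G) ⊓ (P₂ : Subgroup G) :=
    ⟨hP₁ (mem_map_of_mem _ hq.1), hP₂ (mem_map_of_mem _ hq.2)⟩
  rw [hbot, Subgroup.mem_bot] at h1
  have : q = 1 := Subtype.ext h1
  simp [this]

lemma sylow_notnormal_transfer
    (hnotnormal : ∀ P : Sylow p G, ¬ (P : Subgroup G).Normal)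
    (hTI : ∀ P Q : Sylow p G, P ≠ Q → (P : Subgroup G) ⊓ (Q : Subgroup G) = ⊥)
    {S : Subgroup G} (hS : S.Normal) (hpS : p ∣ Nat.card S) :
    ∀ Q : Sylow p ↥S, ¬ (Q : Subgroup ↥S).Normal := fun Q hQ =>
  no_normal_sylow hnotnormal hTI hS hpS Q hQ

theorem aux_main (p : ℕ) [Fact p.Prime] (n : ℕ) :
    ∀ (G : Type) [Group G] [Finite G], Nat.card G ≤ n →
    p ∣ Nat.card G →
    (∀ P : Sylow p G, ¬ (P : Subgroup G).Normal) →
    (∀ P Q : Sylow p G, P ≠ Q → (P : Subgroup G) ⊓ (Q : Subgroup G) = ⊥) →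
    (∀ N : Subgroup G, N.Normal → N ≠ ⊥ → p ∣ Nat.card N) →
    ∃ S : Subgroup G,
      (S.Normal ∧ S ≠ ⊥ ∧
        ∀ T : Subgroup G, T.Normal → T ≠ ⊥ → T ≤ S → T = S) ∧
      (¬ ∀ a b : S, a * b = b * a) ∧ IsSimpleGroup S ∧
      (∀ S' : Subgroup G,
        (S'.Normal ∧ S' ≠ ⊥ ∧
          ∀ T : Subgroup G, T.Normal → T ≠ ⊥ → T ≤ S' → T = S') → S' = S) := by
  induction n with
  | zero =>
    intro G _ _ hle _ _ _ _
    exact absurd hle (by have : 0 < Nat.card G := Nat.card_pos; omega)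
  | succ n ih =>
    intro G _ _ hle hdvd hnn hTI hOp'
    haveI : Nontrivial G := by
      rw [← Finite.one_lt_card_iff_nontrivial]
      have h1 : 0 < Nat.card G := Nat.card_pos
      have h2 : p ≤ Nat.card G := Nat.le_of_dvd h1 hdvd
      have := (Fact.out : p.Prime).two_le
      omega
    have htopnormal : (⊤ : Subgroup G).Normal := ⟨fun n _ g => mem_top _⟩
    -- choose a minimal nontrivial normal subgroup S
    have h𝒮 : Nat.card (⊤ : Subgroup G) ∈
        {m | ∃ N : Subgroup G, N.Normal ∧ N ≠ ⊥ ∧ Nat.card N = m} :=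
      ⟨⊤, htopnormal, top_ne_bot, rfl⟩
    obtain ⟨S, hSnorm, hSbot, hScard⟩ :=
      Nat.sInf_mem (Set.nonempty_of_mem h𝒮)
    have hSmin : ∀ T : Subgroup G, T.Normal → T ≠ ⊥ → T ≤ S → T = S := by
      intro T h1 h2 h3
      apply myEqOfLeCard h3
      rw [hScard]
      exact Nat.sInf_le ⟨T, h1, h2, rfl⟩
    have hpS : p ∣ Nat.card S := hOp' S hSnorm hSbot
    -- nonabelian
    have hnab : ¬ ∀ a b : ↥S, a * b = b * a := by
      intro hab
      obtain ⟨x, hxS, hx⟩ := exists_mem_orderOf_eq hpS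
      have hx1 : x ≠ 1 := by
        intro h
        rw [h, orderOf_one] at hx
        exact (Fact.out : p.Prime).one_lt.ne hx
      set T : Subgroup G :=
        { carrier := {a | a ∈ S ∧ a ^ p = 1}
          one_mem' := ⟨S.one_mem, one_pow p⟩
          mul_mem' := by
            rintro a b ⟨haS, hap⟩ ⟨hbS, hbp⟩
            refine ⟨S.mul_mem haS hbS, ?_⟩
            have hcomm : Commute a b := by
              have := hab ⟨a, haS⟩ ⟨b, hbS⟩
              exact Subtype.ext_iff.mp this
            rw [hcomm.mul_pow, hap, hbp, one_mul]
          inv_mem' := by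
            rintro a ⟨haS, hap⟩
            exact ⟨S.inv_mem haS, by rw [inv_pow, hap, inv_one]⟩ } with hT
      have hTnormal : T.Normal := by
        constructor
        rintro a ⟨haS, hap⟩ g
        refine ⟨hSnorm.conj_mem a haS g, ?_⟩
        rw [conj_pow, hap, mul_one, mul_inv_cancel]
      have hTp : IsPGroup p T := by
        intro t
        refine ⟨1, ?_⟩
        apply Subtype.ext
        rw [pow_one]
        push_cast
        exact t.2.2
      have hxT : x ∈ T := ⟨hxS, by rw [← hx]; exact pow_orderOf_eq_one x⟩
      rw [pnormal_eq_bot hnn hTI hTnormal hTp] at hxT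
      exact hx1 hxT
    -- uniqueness
    have huniq : ∀ S' : Subgroup G,
        (S'.Normal ∧ S' ≠ ⊥ ∧
          ∀ T : Subgroup G, T.Normal → T ≠ ⊥ → T ≤ S' → T = S') → S' = S := by
      rintro S' ⟨h1, h2, h3⟩
      by_cases hb : S ⊓ S' = ⊥
      · exact (no_two_disjoint_normals hnn hTI hOp' hSnorm h1 hSbot h2 hb).elim
      · have hinf : (S ⊓ S').Normal :=
          ⟨fun a ha g => ⟨hSnorm.conj_mem a ha.1 g, h1.conj_mem a ha.2 g⟩⟩
        have hA : S ⊓ S' = S := hSmin _ hinf hb inf_le_left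
        have hB : S ⊓ S' = S' := h3 _ hinf hb inf_le_right
        rw [← hA, hB]
    -- simplicity
    haveI : Nontrivial ↥S := (nontrivial_iff_ne_bot S).mpr hSbot
    have hsimple : IsSimpleGroup ↥S := by
      by_cases htop : S = ⊤
      · constructor
        intro A hA
        by_cases hAbot : A = ⊥
        · exact Or.inl hAbot
        refine Or.inr ?_
        have hA'norm : (A.map S.subtype).Normal := by
          constructor
          intro a ha g
          obtain ⟨q, hq, rfl⟩ := ha
          have hgS : g ∈ S := htop ▸ mem_top g
          have h1 : g * S.subtype q * g⁻¹ =
              S.subtype ((⟨g, hgS⟩ : ↥S) * q * (⟨g, hgS⟩ : ↥S)⁻¹) := rfl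
          rw [h1]
          exact mem_map_of_mem _ (hA.conj_mem q hq ⟨g, hgS⟩)
        have hA'bot : A.map S.subtype ≠ ⊥ :=
          map_ne_bot S.subtype (subtype_injective S) A hAbot
        have hA'S : A.map S.subtype = S := hSmin _ hA'norm hA'bot (map_subtype_le _)
        have h6 : A = (A.map S.subtype).comap S.subtype :=
          (comap_map_eq_self_of_injective (subtype_injective S) A).symm
        rw [hA'S] at h6
        rw [h6]
        exact subgroupOf_self S
      · have hcardlt : Nat.card ↥S < Nat.card G := by
          by_contra h
          push_neg at h
          apply htop
          apply myEqOfLeCard le_top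
          rwa [card_top]
        obtain ⟨T, ⟨hT1, hT2, hT3⟩, _hT4, hT5, hT6⟩ :=
          ih ↥S (by omega) (hOp' S hSnorm hSbot)
            (sylow_notnormal_transfer hnn hTI hSnorm hpS)
            (TI_transfer hTI S) (op'_transfer hOp' hSnorm)
        haveI := hSnorm
        have hmapinj : ∀ (e : ↥S ≃* ↥S) (U : Subgroup ↥S), U ≠ ⊥ →
            U.map e.toMonoidHom ≠ ⊥ := fun e U hU =>
          map_ne_bot e.toMonoidHom e.injective U hU
        have hTtop : T = ⊤ := by
          set T' := T.map S.subtype with hT'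
          have hT'norm : T'.Normal := by
            constructor
            intro a ha g
            obtain ⟨t, ht, rfl⟩ := ha
            rw [show g * S.subtype t * g⁻¹ = S.subtype (MulAut.conjNormal g t) from
              (MulAut.conjNormal_apply g t).symm]
            apply mem_map_of_mem
            have himg : T.map (MulAut.conjNormal g).toMonoidHom = T := by
              apply hT6
              refine ⟨Subgroup.Normal.map hT1 _ (MulEquiv.surjective _),
                hmapinj _ _ hT2, ?_⟩
              intro U hU1 hU2 hU3
              have hcomp : ∀ (e : ↥S ≃* ↥S) (V : Subgroup ↥S),
                  (V.map e.toMonoidHom).map e.symm.toMonoidHom = V := by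
                intro e V
                rw [Subgroup.map_map]
                have : (e.symm.toMonoidHom.comp e.toMonoidHom) = MonoidHom.id ↥S := by
                  ext z
                  simp
                rw [this, Subgroup.map_id]
              have h5 : U.map (MulAut.conjNormal g).symm.toMonoidHom = T := by
                apply hT3
                · exact Subgroup.Normal.map hU1 _ (MulEquiv.surjective _)
                · exact hmapinj _ _ hU2
                · have := Subgroup.map_mono (f := (MulAut.conjNormal g).symm.toMonoidHom) hU3
                  rwa [hcomp] at this
              have := congrArg (Subgroup.map (MulAut.conjNormal g).toMonoidHom) h5
              rw [show ∀ V : Subgroup ↥S,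
                  (V.map (MulAut.conjNormal g).symm.toMonoidHom).map
                    (MulAut.conjNormal g).toMonoidHom = V from fun V => by
                rw [Subgroup.map_map]
                have : ((MulAut.conjNormal (H := S) g).toMonoidHom.comp
                    (MulAut.conjNormal g).symm.toMonoidHom) = MonoidHom.id ↥S := by
                  ext z
                  simp
                rw [this, Subgroup.map_id]] at this
              exact this
            rw [← himg]
            exact mem_map_of_mem _ ht
          have hT'bot : T' ≠ ⊥ :=
            map_ne_bot S.subtype (subtype_injective S) T hT2
          have hT'S : T' = S := hSmin T' hT'norm hT'bot (map_subtype_le _)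
          have h6 : T = T'.comap S.subtype :=
            (comap_map_eq_self_of_injective (subtype_injective S) T).symm
          rw [hT'S] at h6
          rw [h6]
          exact subgroupOf_self S
        haveI : IsSimpleGroup ↥(⊤ : Subgroup ↥S) := hTtop ▸ hT5
        exact IsSimpleGroup.isSimpleGroup_of_surjective (Subgroup.topEquiv (G := ↥S)).toMonoidHom
          (Subgroup.topEquiv (G := ↥S)).surjective
    exact ⟨S, ⟨hSnorm, hSbot, hSmin⟩, hnab, hsimple, huniq⟩
end Aux

/-- Let `p` be a prime and `G` a finite group with `p ∣ |G|`, non-normal,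
trivial intersection Sylow `p`-subgroups, and `O_{p'}(G) = 1` (every nontrivial
normal subgroup has order divisible by `p`). Then `G` has a unique minimal normal
subgroup `S`, and `S` is a nonabelian simple group. -/
theorem unique_minimal_normal_of_TI (p : ℕ) [Fact p.Prime] (G : Type) [Group G] [Finite G]
    (hdvd : p ∣ Nat.card G)
    (hnotnormal : ∀ P : Sylow p G, ¬ (P : Subgroup G).Normal)
    (hTI : ∀ P Q : Sylow p G, P ≠ Q → (P : Subgroup G) ⊓ (Q : Subgroup G) = ⊥)
    (hOp' : ∀ N : Subgroup G, N.Normal → N ≠ ⊥ → p ∣ Nat.card N) :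
    ∃ S : Subgroup G,
      (S.Normal ∧ S ≠ ⊥ ∧
        ∀ T : Subgroup G, T.Normal → T ≠ ⊥ → T ≤ S → T = S) ∧
      (¬ ∀ a b : S, a * b = b * a) ∧ IsSimpleGroup S ∧
      (∀ S' : Subgroup G,
        (S'.Normal ∧ S' ≠ ⊥ ∧
          ∀ T : Subgroup G, T.Normal → T ≠ ⊥ → T ≤ S' → T = S') → S' = S) :=
  aux_main p (Nat.card G) G le_rfl hdvd hnotnormal hTI hOp'
end

section
/- Let p be a prime and G a finite group such that p divides the order of G, the Sylow p-subgroups of G are not normal, any two distinct Sylow p-subgroups of G intersect in the trivial subgroup, and every nontrivial normal subgroup of G has order divisible by p (i.e. O_{p'}(G) = 1). Let S be the unique minimal normal subgroup of G. Then the centralizer C_G(S) is trivial, so the conjugation action gives an injective homomorphism from G into the automorphism group of S; moreover S itself has non-normal Sylow p-subgroups any two distinct of which intersect trivially. -/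
open Subgroup Pointwise

/-- Every nontrivial normal subgroup of a finite group contains a minimal normal subgroup. -/
lemma exists_minimal_normal_le {G : Type*} [Group G] [Finite G] :
    ∀ N : Subgroup G, N.Normal → N ≠ ⊥ →
      ∃ T : Subgroup G, T ≤ N ∧ T.Normal ∧ T ≠ ⊥ ∧
        ∀ T' : Subgroup G, T'.Normal → T' ≠ ⊥ → T' ≤ T → T' = T := by
  intro N
  induction N using WellFoundedLT.induction with
  | ind N ih =>
    intro hN hbot
    by_cases hmin : ∀ T' : Subgroup G, T'.Normal → T' ≠ ⊥ → T' ≤ N → T' = N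
    · exact ⟨N, le_rfl, hN, hbot, hmin⟩
    · push_neg at hmin
      obtain ⟨T', hT'norm, hT'bot, hT'le, hT'ne⟩ := hmin
      obtain ⟨T, h1, h2, h3, h4⟩ := ih T' (lt_of_le_of_ne hT'le hT'ne) hT'norm hT'bot
      exact ⟨T, h1.trans hT'le, h2, h3, h4⟩

/-- Under TI and non-normality of Sylow subgroups, there is no nontrivial normal
`p`-subgroup. -/
lemma normal_pGroup_eq_bot {p : ℕ} [Fact p.Prime] {G : Type*} [Group G] [Finite G]
    (hnotnormal : ∀ P : Sylow p G, ¬ (P : Subgroup G).Normal)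
    (hTI : ∀ P Q : Sylow p G, P ≠ Q → (P : Subgroup G) ⊓ (Q : Subgroup G) = ⊥)
    (N : Subgroup G) (hN : N.Normal) (hNp : IsPGroup p N) : N = ⊥ := by
  obtain ⟨P, hP⟩ := hNp.exists_le_sylow
  have : ∃ g : G, g ∉ Subgroup.normalizer ((P : Subgroup G) : Set G) := by
    by_contra h
    push_neg at h
    exact hnotnormal P (Subgroup.normalizer_eq_top_iff.mp ((Subgroup.eq_top_iff' _).mpr h))
  obtain ⟨g, hg⟩ := this
  have hne : g • P ≠ P := fun h => hg (Sylow.smul_eq_iff_mem_normalizer.mp h)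
  have hNle : N ≤ (g • P : Sylow p G) := by
    intro x hx
    have hx' : g⁻¹ * x * g ∈ N := by
      have := hN.conj_mem x hx g⁻¹
      simpa using this
    have : g⁻¹ * x * g ∈ (P : Subgroup G) := hP hx'
    have : x ∈ MulAut.conj g • (P : Subgroup G) := by
      rw [Subgroup.mem_pointwise_smul_iff_inv_smul_mem]
      simpa [mul_assoc] using this
    simpa [Sylow.coe_subgroup_smul] using this
  have := hTI P (g • P) (Ne.symm hne)
  rw [eq_bot_iff, ← this]
  exact le_inf hP hNle

/-- Under the hypotheses of Eaton's lemma (trivial intersection, non-normal Sylow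
`p`-subgroups, `O_{p'}(G) = 1`), if `S` is the (unique) minimal normal subgroup of `G`,
then `C_G(S) = 1`, so conjugation gives an injective homomorphism `G → Aut(S)`;
moreover `S` itself has non-normal Sylow `p`-subgroups, any two distinct of which
intersect trivially. -/
theorem minimal_normal_embeds_in_aut (p : ℕ) [Fact p.Prime] (G : Type) [Group G] [Finite G]
    (hdvd : p ∣ Nat.card G)
    (hnotnormal : ∀ P : Sylow p G, ¬ (P : Subgroup G).Normal)
    (hTI : ∀ P Q : Sylow p G, P ≠ Q → (P : Subgroup G) ⊓ (Q : Subgroup G) = ⊥)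
    (hOp' : ∀ N : Subgroup G, N.Normal → N ≠ ⊥ → p ∣ Nat.card N)
    (S : Subgroup G) [S.Normal] (hSbot : S ≠ ⊥)
    (hSmin : ∀ T : Subgroup G, T.Normal → T ≠ ⊥ → T ≤ S → T = S)
    (hSuniq : ∀ S' : Subgroup G, S'.Normal → S' ≠ ⊥ →
      (∀ T : Subgroup G, T.Normal → T ≠ ⊥ → T ≤ S' → T = S') → S' = S) :
    Subgroup.centralizer (S : Set G) = ⊥ ∧
    Function.Injective (MulAut.conjNormal : G →* MulAut S) ∧
    (∀ P : Sylow p S, ¬ (P : Subgroup S).Normal) ∧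
    (∀ P Q : Sylow p S, P ≠ Q → (P : Subgroup S) ⊓ (Q : Subgroup S) = ⊥) := by
  have hpS : p ∣ Nat.card S := hOp' S ‹S.Normal› hSbot
  -- a normal Sylow subgroup of S leads to a contradiction
  have hSylS : ∀ P : Sylow p S, ¬ (P : Subgroup S).Normal := by
    intro P hPnorm
    haveI : (P : Subgroup S).Normal := hPnorm
    haveI : (P : Subgroup S).Characteristic := Sylow.characteristic_of_normal P hPnorm
    have hmapnorm : ((P : Subgroup S).map S.subtype).Normal := inferInstance
    have hmapP : IsPGroup p ((P : Subgroup S).map S.subtype) := P.2.map S.subtype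
    have hbot := normal_pGroup_eq_bot hnotnormal hTI _ hmapnorm hmapP
    have hPbot : (P : Subgroup S) = ⊥ := by
      rwa [Subgroup.map_eq_bot_iff_of_injective _ (Subgroup.subtype_injective S)] at hbot
    exact P.ne_bot_of_dvd_card hpS hPbot
  -- centralizer is trivial
  have hcent : Subgroup.centralizer (S : Set G) = ⊥ := by
    by_contra hC
    set C := Subgroup.centralizer (S : Set G) with hCdef
    have hCnorm : C.Normal := by
      constructor
      intro c hc g
      rw [Subgroup.mem_centralizer_iff]
      intro s hs
      have hs' : g⁻¹ * s * g ∈ S := by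
        have := ‹S.Normal›.conj_mem s hs g⁻¹
        simpa using this
      have hcomm : (g⁻¹ * s * g) * c = c * (g⁻¹ * s * g) :=
        (Subgroup.mem_centralizer_iff.mp hc) _ hs'
      have : s * (g * c * g⁻¹) = g * ((g⁻¹ * s * g) * c) * g⁻¹ := by group
      rw [this, hcomm]; group
    obtain ⟨T, hTle, hTnorm, hTbot, hTmin⟩ := exists_minimal_normal_le C hCnorm hC
    have hTS : T = S := hSuniq T hTnorm hTbot hTmin
    have hSC : S ≤ C := hTS ▸ hTle
    -- S is contained in its own centralizer, so every subgroup of S is normal in S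
    obtain ⟨P⟩ : Nonempty (Sylow p S) := inferInstance
    refine hSylS P ?_
    constructor
    intro n hn g
    have hg : (g : G) ∈ Subgroup.centralizer (S : Set G) := hSC g.2
    have hcomm : (n : G) * g = g * n := (Subgroup.mem_centralizer_iff.mp hg) _ n.2
    have : g * n * g⁻¹ = n := by
      have : (↑(g * n * g⁻¹) : G) = ↑n := by
        push_cast
        rw [← hcomm]; group
      exact Subtype.ext this
    rwa [this]
  refine ⟨hcent, ?_, hSylS, ?_⟩
  · -- injectivity
    rw [injective_iff_map_eq_one]
    intro g hg
    have : g ∈ Subgroup.centralizer (S : Set G) := by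
      rw [Subgroup.mem_centralizer_iff]
      intro s hs
      have := congrArg (fun e => ((e ⟨s, hs⟩ : S) : G)) hg
      simp only [MulAut.conjNormal_apply, MulAut.one_apply] at this
      -- this : g * s * g⁻¹ = s
      nth_rewrite 1 [← this]; group
    rwa [hcent, Subgroup.mem_bot] at this
  · -- TI for S
    intro P Q hPQ
    obtain ⟨P', hP'⟩ := (P.2.map S.subtype).exists_le_sylow
    obtain ⟨Q', hQ'⟩ := (Q.2.map S.subtype).exists_le_sylow
    have key : ∀ (R : Sylow p S) (R' : Sylow p G), (R : Subgroup S).map S.subtype ≤ R' →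
        (R : Subgroup S) = (R' : Subgroup G).comap S.subtype := by
      intro R R' hR
      have hcomap : IsPGroup p ((R' : Subgroup G).comap S.subtype) :=
        R'.2.comap_of_injective S.subtype (Subgroup.subtype_injective S)
      have hle : (R : Subgroup S) ≤ (R' : Subgroup G).comap S.subtype := by
        intro x hx
        exact hR ⟨x, hx, rfl⟩
      exact (R.3 hcomap hle).symm
    have hP'Q' : P' ≠ Q' := by
      intro h
      apply hPQ
      apply Sylow.ext
      rw [key P P' hP', key Q Q' hQ', h]
    have hinter := hTI P' Q' hP'Q'
    rw [eq_bot_iff]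
    intro x hx
    have hxP : (x : G) ∈ (P' : Subgroup G) := hP' ⟨x, hx.1, rfl⟩
    have hxQ : (x : G) ∈ (Q' : Subgroup G) := hQ' ⟨x, hx.2, rfl⟩
    have hmem : (x : G) ∈ (P' : Subgroup G) ⊓ (Q' : Subgroup G) := ⟨hxP, hxQ⟩
    rw [hinter, Subgroup.mem_bot] at hmem
    exact Subgroup.mem_bot.mpr (Subtype.ext hmem)
end

section
/- Let k be a commutative ring and let A and B be k-algebras that are Morita equivalent, i.e. there is a k-linear equivalence between the category of (left) A-modules and the category of (left) B-modules. Then the centres Z(A) and Z(B) are isomorphic as k-algebras. -/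
open CategoryTheory

universe u

section

variable (k : Type u) [CommRing k] (A : Type u) [Ring A] [Algebra k A]

/-- The `k`-module structure on an `A`-module `M`, for `A` an algebra over a
commutative ring `k` (restriction of scalars along `k → A`). -/
def moduleOfAlgebraModule' (M : ModuleCat.{u} A) : Module k M :=
  RestrictScalars.module k A M

attribute [instance] moduleOfAlgebraModule'

theorem isScalarTower_of_algebra_moduleCat' (M : ModuleCat.{u} A) : IsScalarTower k A M :=
  RestrictScalars.isScalarTower k A M

attribute [instance] isScalarTower_of_algebra_moduleCat'

/-- The category of `A`-modules is a `k`-linear category, for `A` an algebra over the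
commutative ring `k`. -/
instance linearOverCommRing : Linear k (ModuleCat.{u} A) where
  homModule _ _ := inferInstance

end

section Transport

variable {k : Type*} [CommRing k]
variable {C D : Type*} [Category C] [Category D] [Preadditive C] [Preadditive D]
  [Linear k C] [Linear k D] (e : C ≌ D) [e.functor.Additive] [e.functor.Linear k]

/-- Transport of a natural endomorphism of the identity along an equivalence. -/
def transportEnd (η : End (𝟭 C)) : End (𝟭 D) :=
  { app := fun X => e.counitInv.app X ≫ e.functor.map (η.app (e.inverse.obj X)) ≫ e.counit.app X
    naturality := by
      intro X Y g
      simp only [Functor.id_obj, Functor.id_map]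
      rw [← Category.assoc,
        show g ≫ e.counitInv.app Y = e.counitInv.app X ≫ (e.inverse ⋙ e.functor).map g from
          e.counitInv.naturality g]
      simp only [Functor.comp_obj, Functor.comp_map, Category.assoc]
      congr 1
      rw [← Functor.map_comp_assoc,
        show e.inverse.map g ≫ η.app (e.inverse.obj Y)
            = η.app (e.inverse.obj X) ≫ e.inverse.map g from η.naturality _,
        Functor.map_comp_assoc]
      congr 1
      exact show (e.inverse ⋙ e.functor).map g ≫ e.counit.app Y = e.counit.app X ≫ g from
        e.counit.naturality g }

def transportEndInv (θ : End (𝟭 D)) : End (𝟭 C) :=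
  { app := fun X => e.unit.app X ≫ e.inverse.map (θ.app (e.functor.obj X)) ≫ e.unitInv.app X
    naturality := by
      intro X Y g
      simp only [Functor.id_obj, Functor.id_map]
      rw [← Category.assoc,
        show g ≫ e.unit.app Y = e.unit.app X ≫ (e.functor ⋙ e.inverse).map g from
          e.unit.naturality g]
      simp only [Functor.comp_obj, Functor.comp_map, Category.assoc]
      congr 1
      rw [← Functor.map_comp_assoc,
        show e.functor.map g ≫ θ.app (e.functor.obj Y)
            = θ.app (e.functor.obj X) ≫ e.functor.map g from θ.naturality _,
        Functor.map_comp_assoc]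
      congr 1
      exact show (e.functor ⋙ e.inverse).map g ≫ e.unitInv.app Y = e.unitInv.app X ≫ g from
        e.unitInv.naturality g }

theorem transportEnd_left_inv (η : End (𝟭 C)) : transportEndInv e (transportEnd e η) = η := by
  refine NatTrans.ext (funext fun X => ?_)
  simp only [transportEnd, transportEndInv, Functor.id_obj, Functor.comp_obj, Functor.map_comp,
    Equivalence.inv_fun_map, Category.assoc, Equivalence.unit_inverse_comp, Category.comp_id,
    Equivalence.inverse_counitInv_comp_assoc]
  rw [← Category.assoc,
    show e.unit.app X ≫ η.app (e.inverse.obj (e.functor.obj X)) = η.app X ≫ e.unit.app X from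
      η.naturality _]
  simp

theorem transportEnd_right_inv (θ : End (𝟭 D)) : transportEnd e (transportEndInv e θ) = θ := by
  refine NatTrans.ext (funext fun X => ?_)
  simp only [transportEnd, transportEndInv, Functor.id_obj, Functor.comp_obj, Functor.map_comp,
    Equivalence.fun_inv_map, Category.assoc, Equivalence.counitInv_functor_comp, Category.comp_id,
    Equivalence.functor_unit_comp_assoc]
  rw [show θ.app (e.functor.obj (e.inverse.obj X)) ≫ e.counit.app X
      = e.counit.app X ≫ θ.app X from (θ.naturality _).symm]
  simp

end Transport

section Transport2

variable {k : Type*} [CommRing k]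
variable {C D : Type*} [Category C] [Category D] [Preadditive C] [Preadditive D]
  [Linear k C] [Linear k D] (e : C ≌ D) [e.functor.Additive] [e.functor.Linear k]

/-- Transport of endomorphisms of the identity functor along an equivalence, as an
algebra equivalence. -/
def transportEndAlgEquiv : End (𝟭 C) ≃ₐ[k] End (𝟭 D) where
  toFun := transportEnd e
  invFun := transportEndInv e
  left_inv := transportEnd_left_inv e
  right_inv := transportEnd_right_inv e
  map_mul' x y := by
    refine NatTrans.ext (funext fun X => ?_)
    show (transportEnd e (y ≫ x)).app X = ((transportEnd e y) ≫ (transportEnd e x)).app X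
    simp [transportEnd]
  map_add' x y := by
    refine NatTrans.ext (funext fun X => ?_)
    have h1 : (x + y).app (e.inverse.obj X)
        = x.app (e.inverse.obj X) + y.app (e.inverse.obj X) := rfl
    have h2 : (transportEnd e x + transportEnd e y).app X
        = (transportEnd e x).app X + (transportEnd e y).app X := rfl
    show (transportEnd e (x + y)).app X = (transportEnd e x + transportEnd e y).app X
    rw [h2]
    simp only [transportEnd, h1]
    simp [Preadditive.add_comp, Preadditive.comp_add]
  commutes' c := by
    refine NatTrans.ext (funext fun X => ?_)
    rw [Algebra.algebraMap_eq_smul_one, Algebra.algebraMap_eq_smul_one]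
    have h1 : (c • (𝟙 (𝟭 C) : End (𝟭 C))).app (e.inverse.obj X)
        = c • (𝟙 (e.inverse.obj X)) := rfl
    have h2 : (c • (𝟙 (𝟭 D) : End (𝟭 D))).app X = c • (𝟙 X) := rfl
    show (transportEnd e (c • (𝟙 (𝟭 C)))).app X = (c • (𝟙 (𝟭 D) : End (𝟭 D))).app X
    rw [h2]
    simp only [transportEnd, h1]
    simp [Functor.map_smul, Linear.comp_smul, Linear.smul_comp]

end Transport2

section CenterEnd

variable (k : Type u) [CommRing k] (A : Type u) [Ring A] [Algebra k A]

/-- Scalar multiplication by a central element, as an endomorphism of the identity functor. -/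
def smulNatTrans (z : Subalgebra.center k A) : End (𝟭 (ModuleCat.{u} A)) where
  app M := ModuleCat.ofHom
    { toFun := fun m => (z : A) • m
      map_add' := fun m n => smul_add _ m n
      map_smul' := fun a m => by
        simp only [RingHom.id_apply, ← mul_smul]
        rw [show (z : A) * a = a * (z : A) from (Subalgebra.mem_center_iff.mp z.2 a).symm] }
  naturality M N f := by
    ext m
    exact (f.hom.map_smul (z : A) m).symm

/-- The component of an endomorphism of the identity functor, with user-friendly type. -/
def endApp (η : End (𝟭 (ModuleCat.{u} A))) (M : ModuleCat.{u} A) : M ⟶ M := η.app M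

theorem endApp_natural (η : End (𝟭 (ModuleCat.{u} A))) {M N : ModuleCat.{u} A}
    (f : M ⟶ N) (m : M) : endApp A η N (f m) = f (endApp A η M m) := by
  have h' : f ≫ endApp A η N = endApp A η M ≫ f := η.naturality f
  calc endApp A η N (f m) = (f ≫ endApp A η N) m := rfl
  _ = (endApp A η M ≫ f) m := by rw [h']
  _ = f (endApp A η M m) := rfl

/-- For `m` in an `A`-module `M`, the map `x ↦ x • m` as a morphism in `ModuleCat A`. -/
def toModule (M : ModuleCat.{u} A) (m : M) : ModuleCat.of A A ⟶ M :=
  ModuleCat.ofHom (LinearMap.toSpanSingleton A M m)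

/-- The value of an endomorphism of the identity functor on `1 : A`. -/
def endOne (η : End (𝟭 (ModuleCat.{u} A))) : A := endApp A η (ModuleCat.of A A) (1 : A)

theorem endApp_eq_smul (η : End (𝟭 (ModuleCat.{u} A))) (M : ModuleCat.{u} A) (m : M) :
    endApp A η M m = (endOne A η) • m := by
  have h := endApp_natural A η (toModule A M m) (1 : A)
  rw [show (toModule A M m) (1 : A) = (1 : A) • m from rfl, one_smul] at h
  rw [h]
  rfl

theorem endOne_comm (η : End (𝟭 (ModuleCat.{u} A))) (b : A) :
    b * endOne A η = endOne A η * b := by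
  have h1 : endApp A η (ModuleCat.of A A) b = endOne A η * b :=
    endApp_eq_smul A η (ModuleCat.of A A) b
  have h2 : endApp A η (ModuleCat.of A A) b = b * endOne A η := by
    conv_lhs => rw [show b = b * (1 : A) from (mul_one b).symm]
    exact map_smul (endApp A η (ModuleCat.of A A)).hom b (1 : A)
  calc b * endOne A η = endApp A η (ModuleCat.of A A) b := h2.symm
  _ = endOne A η * b := h1

/-- The centre of `A` is isomorphic, as a `k`-algebra, to the algebra of endomorphisms
of the identity functor on `A`-modules. -/
def centerAlgEquivEnd : Subalgebra.center k A ≃ₐ[k] End (𝟭 (ModuleCat.{u} A)) where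
  toFun := smulNatTrans k A
  invFun η := ⟨endOne A η, Subalgebra.mem_center_iff.mpr (endOne_comm A η)⟩
  left_inv z := Subtype.ext (by
    show (z : A) * (1 : A) = (z : A)
    rw [mul_one])
  right_inv η := by
    refine NatTrans.ext (funext fun M => ?_)
    show (smulNatTrans k A _).app M = endApp A η M
    ext m
    show (endOne A η) • m = endApp A η M m
    exact (endApp_eq_smul A η M m).symm
  map_mul' z w := by
    refine NatTrans.ext (funext fun M => ?_)
    show (smulNatTrans k A (z * w)).app M
      = (smulNatTrans k A w ≫ smulNatTrans k A z : End (𝟭 (ModuleCat.{u} A))).app M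
    ext m
    show ((z : A) * (w : A)) • m = (z : A) • ((w : A) • m)
    rw [mul_smul]
  map_add' z w := by
    refine NatTrans.ext (funext fun M => ?_)
    have h2 : (smulNatTrans k A z + smulNatTrans k A w).app M
        = (smulNatTrans k A z).app M + (smulNatTrans k A w).app M := rfl
    rw [h2]
    ext m
    show ((z : A) + (w : A)) • m = (z : A) • m + (w : A) • m
    rw [add_smul]
  commutes' c := by
    refine NatTrans.ext (funext fun M => ?_)
    rw [Algebra.algebraMap_eq_smul_one (A := End (𝟭 (ModuleCat.{u} A)))]
    have h2 : ((c • (1 : End (𝟭 (ModuleCat.{u} A))))).app M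
        = c • (𝟙 M) := rfl
    rw [h2]
    ext m
    show ((algebraMap k (Subalgebra.center k A) c : Subalgebra.center k A) : A) • m
      = (c • (𝟙 M : M ⟶ M)) m
    rw [show ((algebraMap k (Subalgebra.center k A) c : Subalgebra.center k A) : A)
      = algebraMap k A c from rfl]
    rw [show ((c • (𝟙 M : M ⟶ M)) m) = c • m from rfl]
    rw [algebraMap_smul]

end CenterEnd

/-- If `A` and `B` are algebras over a commutative ring `k` which are Morita
equivalent — there is a `k`-linear equivalence between their module categories —
then their centres are isomorphic as `k`-algebras. -/
theorem morita_equivalent_centres_isomorphic (k : Type u) [CommRing k]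
    (A B : Type u) [Ring A] [Ring B] [Algebra k A] [Algebra k B]
    (F : ModuleCat.{u} A ≌ ModuleCat.{u} B)
    [F.functor.Additive] [F.functor.Linear k] :
    Nonempty (↥(Subalgebra.center k A) ≃ₐ[k] ↥(Subalgebra.center k B)) := by
  exact ⟨((centerAlgEquivEnd k A).trans (transportEndAlgEquiv (k := k) F)).trans
    (centerAlgEquivEnd k B).symm⟩
end

section
/- Let p be a prime and m ≥ 1 an integer, and let G = SL(2, GF(p^m)) be the group of 2x2 matrices of determinant 1 over the field with p^m elements. Then any two distinct Sylow p-subgroups of G intersect in the trivial subgroup; that is, G has trivial intersection Sylow p-subgroups. -/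
open Matrix MulAction

namespace SL2TI

variable {K : Type*} [Field K]

/-- Action of `SL(2, K)` on column vectors by `mulVec`. -/
instance : SMul (Matrix.SpecialLinearGroup (Fin 2) K) (Fin 2 → K) :=
  ⟨fun g v => (g : Matrix (Fin 2) (Fin 2) K).mulVec v⟩

lemma smul_def (g : Matrix.SpecialLinearGroup (Fin 2) K) (v : Fin 2 → K) :
    g • v = (g : Matrix (Fin 2) (Fin 2) K).mulVec v := rfl

instance : MulAction (Matrix.SpecialLinearGroup (Fin 2) K) (Fin 2 → K) where
  one_smul v := by simp [smul_def]
  mul_smul g h v := by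
    simp only [smul_def, Matrix.SpecialLinearGroup.coe_mul, Matrix.mulVec_mulVec]

/-- A 2×2 matrix with zero trace and zero determinant squares to zero. -/
lemma sq_eq_zero_of_trace_det (M : Matrix (Fin 2) (Fin 2) K)
    (htr : M 0 0 + M 1 1 = 0) (hdet : M.det = 0) : M * M = 0 := by
  rw [Matrix.det_fin_two] at hdet
  ext i j
  fin_cases i <;> fin_cases j <;>
    simp [Matrix.mul_apply, Fin.sum_univ_two] <;>
    first
      | linear_combination (M 0 0) * htr - hdet
      | linear_combination (M 0 1) * htr
      | linear_combination (M 1 0) * htr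
      | linear_combination (M 1 1) * htr - hdet

/-- If `g ∈ SL(2,K)` fixes a nonzero vector, then `(g - 1)² = 0`. -/
lemma sub_one_sq_eq_zero {g : Matrix.SpecialLinearGroup (Fin 2) K}
    {v : Fin 2 → K} (hv : v ≠ 0) (hgv : g • v = v) :
    ((g : Matrix (Fin 2) (Fin 2) K) - 1) * ((g : Matrix (Fin 2) (Fin 2) K) - 1) = 0 := by
  have hMv : ((g : Matrix (Fin 2) (Fin 2) K) - 1).mulVec v = 0 := by
    rw [Matrix.sub_mulVec, Matrix.one_mulVec, ← smul_def, hgv, sub_self]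
  have hdet : ((g : Matrix (Fin 2) (Fin 2) K) - 1).det = 0 := by
    rw [← Matrix.exists_mulVec_eq_zero_iff]
    exact ⟨v, hv, hMv⟩
  have hdetg : (g : Matrix (Fin 2) (Fin 2) K).det = 1 := g.2
  have hdet' := hdet
  rw [Matrix.det_fin_two] at hdetg hdet'
  simp only [Matrix.sub_apply, Matrix.one_apply_eq, Matrix.one_apply_ne,
    ne_eq, Fin.zero_eq_one_iff, Fin.one_eq_zero_iff, OfNat.ofNat_ne_one,
    not_false_eq_true, sub_zero] at hdet'
  apply sq_eq_zero_of_trace_det _ _ hdet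
  simp only [Matrix.sub_apply, Matrix.one_apply_eq]
  linear_combination hdetg - hdet'

/-- The stabilizer of a nonzero vector in `SL(2,K)` is a `p`-group when `char K = p`. -/
lemma isPGroup_stabilizer {p : ℕ} [Fact p.Prime] [CharP K p]
    {v : Fin 2 → K} (hv : v ≠ 0) :
    IsPGroup p (stabilizer (Matrix.SpecialLinearGroup (Fin 2) K) v) := by
  intro g
  refine ⟨1, ?_⟩
  have hgv : (g : Matrix.SpecialLinearGroup (Fin 2) K) • v = v := g.2
  have hM := sub_one_sq_eq_zero hv hgv
  set A : Matrix (Fin 2) (Fin 2) K := ((g : Matrix.SpecialLinearGroup (Fin 2) K) :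
    Matrix (Fin 2) (Fin 2) K) with hA
  have hp2 : 2 ≤ p := (Fact.out (p := p.Prime)).two_le
  have hpow : A ^ p = 1 := by
    have hcomm : Commute (1 : Matrix (Fin 2) (Fin 2) K) (A - 1) := Commute.one_left _
    have hA1 : A = 1 + (A - 1) := by abel
    rw [hA1, add_pow_char_of_commute p hcomm]
    have hz : (A - 1) ^ p = 0 := by
      have he : (A - 1) ^ p = (A - 1) ^ (p - 2) * ((A - 1) * (A - 1)) := by
        rw [← pow_two, ← pow_add]
        congr 1
        omega
      rw [he, hM, mul_zero]
    rw [hz, one_pow, add_zero]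
  have hg : (g : Matrix.SpecialLinearGroup (Fin 2) K) ^ p = 1 := by
    ext1
    rw [Matrix.SpecialLinearGroup.coe_pow, Matrix.SpecialLinearGroup.coe_one, ← hA, hpow]
  ext1
  rw [pow_one, SubmonoidClass.coe_pow, hg, OneMemClass.coe_one]

end SL2TI

/-- `SL(2, GF(p^m))` has trivial intersection Sylow `p`-subgroups: any two distinct
Sylow `p`-subgroups intersect in the trivial subgroup. -/
theorem sl2_sylow_trivial_intersection (p m : ℕ) [Fact p.Prime] (hm : 1 ≤ m) :
    ∀ P Q : Sylow p (Matrix.SpecialLinearGroup (Fin 2) (GaloisField p m)),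
      P ≠ Q →
        (P : Subgroup (Matrix.SpecialLinearGroup (Fin 2) (GaloisField p m))) ⊓
          (Q : Subgroup (Matrix.SpecialLinearGroup (Fin 2) (GaloisField p m))) = ⊥ := by
  classical
  set K := GaloisField p m with hK
  set G := Matrix.SpecialLinearGroup (Fin 2) K with hG
  intro P Q hPQ
  by_contra hbot
  obtain ⟨x, hx⟩ := Subgroup.ne_bot_iff_exists_ne_one.mp hbot
  -- every Sylow p-subgroup is the stabilizer of a nonzero vector
  have key : ∀ R : Sylow p G, ∃ v : Fin 2 → K, v ≠ 0 ∧
      (R : Subgroup G) = MulAction.stabilizer G v := by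
    intro R
    have hR : IsPGroup p (R : Subgroup G) := R.isPGroup'
    have hzero : (0 : Fin 2 → K) ∈ MulAction.fixedPoints (R : Subgroup G) (Fin 2 → K) := by
      intro g
      show (g : G) • (0 : Fin 2 → K) = 0
      rw [SL2TI.smul_def, Matrix.mulVec_zero]
    have hcard : p ∣ Nat.card (Fin 2 → K) := by
      rw [Nat.card_fun, Nat.card_eq_fintype_card (α := Fin 2), Fintype.card_fin]
      have hcK : Nat.card K = p ^ m := GaloisField.card p m (by omega)
      rw [hcK, ← pow_mul]
      exact dvd_pow_self p (by omega)
    obtain ⟨v, hvfix, hvne⟩ :=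
      hR.exists_fixed_point_of_prime_dvd_card_of_fixed_point (Fin 2 → K) hcard hzero
    refine ⟨v, fun h => hvne h.symm, ?_⟩
    have hle : (R : Subgroup G) ≤ MulAction.stabilizer G v := by
      intro g hg
      exact hvfix ⟨g, hg⟩
    exact (R.3 (SL2TI.isPGroup_stabilizer (fun h => hvne h.symm)) hle).symm
  obtain ⟨v, hv, hPv⟩ := key P
  obtain ⟨w, hw, hQw⟩ := key Q
  have hxP : (x : G) ∈ (P : Subgroup G) := x.2.1
  have hxQ : (x : G) ∈ (Q : Subgroup G) := x.2.2
  have hxv : (x : G) • v = v := by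
    have : (x : G) ∈ MulAction.stabilizer G v := hPv ▸ hxP
    exact this
  have hxw : (x : G) • w = w := by
    have : (x : G) ∈ MulAction.stabilizer G w := hQw ▸ hxQ
    exact this
  have hx1 : (x : G) ≠ 1 := fun h => hx (Subtype.ext h)
  -- case on whether v, w are linearly dependent
  by_cases hD : v 0 * w 1 - v 1 * w 0 = 0
  · -- w is a multiple of v, so the stabilizers coincide
    obtain ⟨c, hc⟩ : ∃ c : K, w = c • v := by
      rcases eq_or_ne (v 0) 0 with h0 | h0
      · have h1 : v 1 ≠ 0 := by
          intro h1
          apply hv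
          funext i; fin_cases i <;> simp [h0, h1]
        refine ⟨w 1 / v 1, funext fun i => ?_⟩
        fin_cases i
        · show w 0 = w 1 / v 1 * v 0
          rw [h0, mul_zero]
          have hvw : v 1 * w 0 = 0 := by linear_combination -hD + w 1 * h0
          rcases mul_eq_zero.mp hvw with h | h
          · exact absurd h h1
          · exact h
        · show w 1 = w 1 / v 1 * v 1
          rw [div_mul_cancel₀ _ h1]
      · refine ⟨w 0 / v 0, funext fun i => ?_⟩
        fin_cases i
        · show w 0 = w 0 / v 0 * v 0
          rw [div_mul_cancel₀ _ h0]
        · show w 1 = w 0 / v 0 * v 1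
          rw [div_mul_eq_mul_div, eq_div_iff h0]
          first
            | linear_combination hD
            | linear_combination -hD
            | linear_combination v 0 * hD
            | linear_combination -(v 0) * hD
    have hsub : MulAction.stabilizer G v ≤ MulAction.stabilizer G w := by
      intro g hg
      have hgv : g • v = v := hg
      show g • w = w
      rw [hc, SL2TI.smul_def, Matrix.mulVec_smul, ← SL2TI.smul_def, hgv]
    have hle : (P : Subgroup G) ≤ (Q : Subgroup G) := by
      rw [hPv, hQw]
      exact hsub
    exact hPQ (Sylow.ext (P.3 Q.isPGroup' hle).symm)
  · -- v, w independent: x fixes a basis, hence x = 1, contradiction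
    apply hx1
    set M : Matrix (Fin 2) (Fin 2) K := Matrix.of ![![v 0, w 0], ![v 1, w 1]] with hMdef
    have hdetM : IsUnit M.det := by
      rw [Matrix.det_fin_two]
      refine isUnit_iff_ne_zero.mpr ?_
      simpa [hMdef] using fun h => hD (by linear_combination h)
    have hxM : ((x : G) : Matrix (Fin 2) (Fin 2) K) * M = M := by
      have hv' := congrFun hxv
      have hw' := congrFun hxw
      simp only [SL2TI.smul_def, Matrix.mulVec, dotProduct, Fin.sum_univ_two] at hv' hw'
      ext i j
      fin_cases i <;> fin_cases j <;>
        simp [Matrix.mul_apply, Fin.sum_univ_two, hMdef] <;>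
        first
          | exact hv' 0 | exact hv' 1 | exact hw' 0 | exact hw' 1
          | linear_combination hv' 0 | linear_combination hv' 1
          | linear_combination hw' 0 | linear_combination hw' 1
    have h2 : ((x : G) : Matrix (Fin 2) (Fin 2) K) * (M * M⁻¹) = M * M⁻¹ := by
      rw [← Matrix.mul_assoc, hxM]
    rw [Matrix.mul_nonsing_inv M hdetM, mul_one] at h2
    exact Subtype.ext h2
end
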